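/- For every integer m ≥ 2, ζ(m) = 1 + ∑_{r ∈ S} ( cosh(m·log r/2)/(2·sinh(m·log r/2)) − 1/2 ), where S is the set of integers r ≥ 2 that are not perfect powers; here cosh, sinh and log are the real hyperbolic functions and logarithm, and the summand equals (1/2)·coth(m·log r/2) − 1/2. -/

import Mathlib

/-- The set of integers `r ≥ 2` that are not perfect powers, i.e. not of the form
`a ^ k` with `a ≥ 2` and `k ≥ 2`. -/
def nonPerfectPowers : Set ℕ :=
  {r | 2 ≤ r ∧ ¬ ∃ a k : ℕ, 2 ≤ a ∧ 2 ≤ k ∧ a ^ k = r}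

lemma npp_coprime {r s j k : ℕ} (hr2 : 2 ≤ r)
    (hrnp : ¬ ∃ a l : ℕ, 2 ≤ a ∧ 2 ≤ l ∧ a ^ l = r)
    (hco : Nat.Coprime j k) (hk : 1 ≤ k) (h : r ^ j = s ^ k) : k = 1 := by
  by_contra hk1
  have hk2 : 2 ≤ k := by omega
  obtain ⟨u, -, hu⟩ := Nat.exists_mul_mod_eq_one_of_coprime hco (by omega)
  have hdm := Nat.div_add_mod (j * u) k
  set v := j * u / k with hv
  have hju : j * u = v * k + 1 := by rw [mul_comm v k]; omega
  have h1 : (s ^ u) ^ k = (r ^ v) ^ k * r := by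
    calc (s ^ u) ^ k = (s ^ k) ^ u := by ring
      _ = (r ^ j) ^ u := by rw [h]
      _ = r ^ (j * u) := by ring
      _ = r ^ (v * k + 1) := by rw [hju]
      _ = (r ^ v) ^ k * r := by ring
  have hdvd : r ^ v ∣ s ^ u := by
    rw [← Nat.pow_dvd_pow_iff (show k ≠ 0 by omega)]
    exact ⟨r, h1⟩
  obtain ⟨t, ht⟩ := hdvd
  have hrvpos : 0 < (r ^ v) ^ k := pow_pos (pow_pos (by omega) v) k
  have htk : t ^ k = r := by
    have h2 : (r ^ v) ^ k * t ^ k = (r ^ v) ^ k * r := by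
      rw [← mul_pow, ← ht, h1]
    exact Nat.eq_of_mul_eq_mul_left hrvpos h2
  have ht2 : 2 ≤ t := by
    by_contra ht1
    have : t ^ k ≤ 1 ^ k := Nat.pow_le_pow_left (by omega) k
    simp at this; omega
  exact hrnp ⟨t, k, ht2, hk2, htk⟩

lemma npp_unique {r s j k : ℕ} (hr : r ∈ nonPerfectPowers) (hs : s ∈ nonPerfectPowers)
    (hj : 1 ≤ j) (hk : 1 ≤ k) (h : r ^ j = s ^ k) : r = s ∧ j = k := by
  obtain ⟨hr2, hrnp⟩ := hr
  obtain ⟨hs2, hsnp⟩ := hs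
  set g := Nat.gcd j k with hg
  have hgpos : 0 < g := Nat.gcd_pos_of_pos_left k (by omega)
  have hjd : g ∣ j := Nat.gcd_dvd_left j k
  have hkd : g ∣ k := Nat.gcd_dvd_right j k
  set j' := j / g with hj'
  set k' := k / g with hk'
  have hjm : j' * g = j := Nat.div_mul_cancel hjd
  have hkm : k' * g = k := Nat.div_mul_cancel hkd
  have hco : Nat.Coprime j' k' := Nat.coprime_div_gcd_div_gcd hgpos
  have hpow : r ^ j' = s ^ k' := by
    have h2 : (r ^ j') ^ g = (s ^ k') ^ g := by
      rw [← pow_mul, ← pow_mul, mul_comm j' g, mul_comm k' g,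
        Nat.mul_div_cancel' hjd, Nat.mul_div_cancel' hkd, h]
    exact Nat.pow_left_injective (by omega) h2
  have hk'pos : 1 ≤ k' := Nat.div_pos (Nat.le_of_dvd (by omega) hkd) hgpos
  have hj'pos : 1 ≤ j' := Nat.div_pos (Nat.le_of_dvd (by omega) hjd) hgpos
  have hk'1 : k' = 1 := npp_coprime hr2 hrnp hco hk'pos hpow
  rw [hk'1, pow_one] at hpow
  have hj'1 : j' = 1 := by
    by_contra hj1
    exact hsnp ⟨r, j', hr2, by omega, hpow⟩
  rw [hj'1, pow_one] at hpow
  refine ⟨hpow, ?_⟩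
  rw [hj'1, one_mul] at hjm
  rw [hk'1, one_mul] at hkm
  omega

lemma npp_exists {n : ℕ} (hn : 2 ≤ n) :
    ∃ p : nonPerfectPowers × ℕ, (p.1 : ℕ) ^ (p.2 + 1) = n := by
  classical
  set P : ℕ → Prop := fun k => ∃ r, 2 ≤ r ∧ r ^ k = n with hP
  have h1 : P 1 := ⟨n, hn, pow_one n⟩
  set K := Nat.findGreatest P n with hKdef
  have hK1 : 1 ≤ K := Nat.le_findGreatest (by omega) h1
  have hKspec : P K := Nat.findGreatest_spec (m := 1) (by omega) h1
  obtain ⟨r, hr2, hrk⟩ := hKspec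
  have hrS : r ∈ nonPerfectPowers := by
    refine ⟨hr2, ?_⟩
    rintro ⟨a, l, ha2, hl2, rfl⟩
    have hfact : a ^ (l * K) = n := by rw [pow_mul]; exact hrk
    have hlt : l * K < 2 ^ (l * K) := Nat.lt_two_pow_self
    have hle : 2 ^ (l * K) ≤ a ^ (l * K) := Nat.pow_le_pow_left ha2 _
    have hbound : l * K ≤ n := by rw [← hfact]; omega
    have hgt : K < l * K := by
      calc K = 1 * K := (one_mul K).symm
        _ < l * K := by
          apply Nat.mul_lt_mul_of_lt_of_le (by omega) (le_refl K) (by omega)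
    exact Nat.findGreatest_is_greatest hgt hbound ⟨a, ha2, hfact⟩
  exact ⟨⟨⟨r, hrS⟩, K - 1⟩, by
    simp only []
    rw [Nat.sub_add_cancel hK1]; exact hrk⟩

noncomputable def nppEquiv : nonPerfectPowers × ℕ ≃ {n : ℕ // 2 ≤ n} :=
  Equiv.ofBijective
    (fun p => ⟨(p.1 : ℕ) ^ (p.2 + 1), by
      have := p.1.2.1
      calc 2 ≤ (p.1 : ℕ) := this
        _ = (p.1 : ℕ) ^ 1 := (pow_one _).symm
        _ ≤ (p.1 : ℕ) ^ (p.2 + 1) := Nat.pow_le_pow_right (by omega) (by omega)⟩)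
    (by
      constructor
      · rintro ⟨⟨r, hr⟩, j⟩ ⟨⟨s, hs⟩, i⟩ hequ
        simp only [Subtype.mk.injEq] at hequ
        obtain ⟨h1, h2⟩ := npp_unique hr hs (by omega) (by omega) hequ
        simp only [Prod.mk.injEq, Subtype.mk.injEq]
        exact ⟨h1, by omega⟩
      · rintro ⟨n, hn⟩
        obtain ⟨p, hp⟩ := npp_exists hn
        exact ⟨p, Subtype.ext hp⟩)

lemma nppEquiv_val (p : nonPerfectPowers × ℕ) :
    ((nppEquiv p : {n : ℕ // 2 ≤ n}) : ℕ) = (p.1 : ℕ) ^ (p.2 + 1) := rfl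

/-- The shift equivalence. -/
def shiftEquiv2 : {n : ℕ // 2 ≤ n} ≃ ℕ where
  toFun p := (p : ℕ) - 2
  invFun n := ⟨n + 2, by omega⟩
  left_inv p := by
    obtain ⟨n, hn⟩ := p
    exact Subtype.ext (by simp; omega)
  right_inv n := by simp

noncomputable def nppFullEquiv : nonPerfectPowers × ℕ ≃ ℕ := nppEquiv.trans shiftEquiv2

lemma nppFullEquiv_val (p : nonPerfectPowers × ℕ) :
    nppFullEquiv p + 2 = (p.1 : ℕ) ^ (p.2 + 1) := by
  have h2 := (nppEquiv p).2
  show ((nppEquiv p : {n : ℕ // 2 ≤ n}) : ℕ) - 2 + 2 = _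
  rw [Nat.sub_add_cancel h2, nppEquiv_val]

lemma key_term (m : ℕ) (hm : 2 ≤ m) (r : ℕ) (hr : 2 ≤ r) :
    Real.cosh (m * Real.log r / 2) / (2 * Real.sinh (m * Real.log r / 2)) - 1 / 2
      = 1 / ((r : ℝ) ^ m - 1) := by
  have hr1 : (1:ℝ) < (r:ℝ) := by exact_mod_cast hr.trans_lt' one_lt_two
  have hr0 : (0:ℝ) < (r:ℝ) := by linarith
  have hlog : 0 < Real.log r := Real.log_pos hr1
  have hmpos : (0:ℝ) < m := by
    have : 0 < m := by omega
    exact_mod_cast this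
  set x := (m : ℝ) * Real.log r / 2 with hx
  have hxpos : 0 < x := by positivity
  have hsinh : 0 < Real.sinh x := Real.sinh_pos_iff.2 hxpos
  set E := Real.exp x with hE
  have hEpos : 0 < E := Real.exp_pos x
  have hE2 : E ^ 2 = (r:ℝ) ^ m := by
    rw [hE, ← Real.exp_nat_mul, hx]
    have h2 : (2:ℝ) * ((m:ℝ) * Real.log r / 2) = (m:ℝ) * Real.log r := by ring
    push_cast
    rw [h2, Real.exp_nat_mul, Real.exp_log hr0]
  have hrm1 : (1:ℝ) < (r:ℝ) ^ m := one_lt_pow₀ hr1 (by omega)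
  have hcosh : Real.cosh x = (E + E⁻¹) / 2 := by
    rw [Real.cosh_eq, hE, Real.exp_neg]
  have hsinh_eq : Real.sinh x = (E - E⁻¹) / 2 := by
    rw [Real.sinh_eq, hE, Real.exp_neg]
  have hsinh_ne : (E - E⁻¹) / 2 ≠ 0 := by rw [← hsinh_eq]; exact ne_of_gt hsinh
  have hEE : E - E⁻¹ ≠ 0 := by
    intro h0; apply hsinh_ne; rw [h0]; ring
  have hden : (r:ℝ) ^ m - 1 ≠ 0 := by linarith
  have hE0 : E ≠ 0 := ne_of_gt hEpos
  have hsq : E ^ 2 - 1 ≠ 0 := by rw [hE2]; linarith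
  have hD : (-2 : ℝ) + E ^ 2 * 2 ≠ 0 := by intro hcon; apply hsq; linarith
  have main : (E + E⁻¹) / 2 / (2 * ((E - E⁻¹) / 2)) - 1 / 2 = 1 / (E ^ 2 - 1) := by
    field_simp [hD]
    have hne : E * E - 1 ≠ 0 := by intro hcon; apply hsq; rw [pow_two]; linarith
    ring
  rw [hcosh, hsinh_eq, main, hE2]

lemma geom_term (m : ℕ) (hm : 2 ≤ m) (r : ℕ) (hr : 2 ≤ r) :
    ∑' j : ℕ, (1 / ((r:ℝ) ^ m)) ^ (j + 1) = 1 / ((r:ℝ) ^ m - 1) := by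
  have hr1 : (1:ℝ) < (r:ℝ) := by exact_mod_cast hr.trans_lt' one_lt_two
  have hR : (1:ℝ) < (r:ℝ) ^ m := one_lt_pow₀ hr1 (by omega)
  set q : ℝ := 1 / ((r:ℝ) ^ m) with hq
  have hq0 : (0:ℝ) ≤ q := by positivity
  have hq1 : q < 1 := by rw [hq, div_lt_one (by linarith)]; linarith
  have hsplit : ∑' j : ℕ, q ^ (j + 1) = q * ∑' j : ℕ, q ^ j := by
    rw [← tsum_mul_left]
    exact tsum_congr fun j => by rw [pow_succ']
  rw [hsplit, tsum_geometric_of_lt_one hq0 hq1, hq]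
  have hR0 : ((r:ℝ) ^ m) ≠ 0 := by positivity
  have hR1 : (r:ℝ) ^ m - 1 ≠ 0 := by linarith
  field_simp

theorem riemannZeta_nat_eq_one_add_tsum_coth
    (m : ℕ) (hm : 2 ≤ m) :
    riemannZeta m = 1 + ↑(∑' r : nonPerfectPowers,
      (Real.cosh (m * Real.log (r : ℕ) / 2) /
        (2 * Real.sinh (m * Real.log (r : ℕ) / 2)) - 1 / 2)) := by
  classical
  set f : ℕ → ℝ := fun n => 1 / (n:ℝ) ^ m with hf
  have hsum : Summable f := Real.summable_one_div_nat_pow.2 (by omega)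
  have hcast : ∀ r j : ℕ, f (r ^ (j + 1)) = (1 / ((r:ℝ) ^ m)) ^ (j + 1) := by
    intro r j
    simp only [hf]
    push_cast
    rw [div_pow, one_pow, ← pow_mul, ← pow_mul, mul_comm]
  -- summability of the reindexed family
  have hshift : Summable (fun n => f (n + 2)) := (summable_nat_add_iff 2).2 hsum
  have hcomp : ∀ p : nonPerfectPowers × ℕ,
      ((fun n => f (n + 2)) ∘ nppFullEquiv) p = f ((p.1 : ℕ) ^ (p.2 + 1)) := by
    intro p
    simp only [Function.comp_apply, nppFullEquiv_val]
  have hFsum : Summable (fun p : nonPerfectPowers × ℕ => f ((p.1 : ℕ) ^ (p.2 + 1))) := by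
    have := (nppFullEquiv.summable_iff (f := fun n => f (n + 2))).2 hshift
    exact this.congr hcomp
  have hslice : ∀ a : nonPerfectPowers, Summable (fun j : ℕ => f ((a : ℕ) ^ (j + 1))) := by
    intro a
    have ha2 : 2 ≤ (a : ℕ) := a.2.1
    have hr1 : (1:ℝ) < ((a:ℕ):ℝ) := by exact_mod_cast ha2.trans_lt' one_lt_two
    have hR : (1:ℝ) < ((a:ℕ):ℝ) ^ m := one_lt_pow₀ hr1 (by omega)
    have hq0 : (0:ℝ) ≤ 1 / (((a:ℕ):ℝ) ^ m) := by positivity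
    have hq1 : 1 / (((a:ℕ):ℝ) ^ m) < 1 := by
      rw [div_lt_one (by linarith)]; linarith
    have hgeo : Summable (fun j : ℕ => (1 / (((a:ℕ):ℝ) ^ m)) ^ j) :=
      summable_geometric_of_lt_one hq0 hq1
    have := hgeo.mul_left (1 / (((a:ℕ):ℝ) ^ m))
    refine this.congr fun j => ?_
    rw [← pow_succ', ← hcast]
  -- reindex the tail sum
  have hreindex : ∑' n : ℕ, f (n + 2)
      = ∑' p : nonPerfectPowers × ℕ, f ((p.1 : ℕ) ^ (p.2 + 1)) := by
    rw [← nppFullEquiv.tsum_eq (fun n => f (n + 2))]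
    exact tsum_congr hcomp
  have hprod : ∑' p : nonPerfectPowers × ℕ, f ((p.1 : ℕ) ^ (p.2 + 1))
      = ∑' a : nonPerfectPowers, ∑' j : ℕ, f ((a : ℕ) ^ (j + 1)) :=
    Summable.tsum_prod' hFsum hslice
  have hinner : ∀ a : nonPerfectPowers,
      ∑' j : ℕ, f ((a : ℕ) ^ (j + 1)) = 1 / (((a:ℕ):ℝ) ^ m - 1) := by
    intro a
    rw [tsum_congr (fun j => hcast (a : ℕ) j)]
    exact geom_term m hm (a : ℕ) a.2.1
  have hreal : ∑' n : ℕ, f n = 1 + ∑' a : nonPerfectPowers, (1 / (((a:ℕ):ℝ) ^ m - 1)) := by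
    rw [Summable.tsum_eq_zero_add hsum, Summable.tsum_eq_zero_add ((summable_nat_add_iff 1).2 hsum)]
    have hf0 : f 0 = 0 := by simp [hf, zero_pow (show m ≠ 0 by omega)]
    have hf1 : f 1 = 1 := by simp [hf]
    have hswap : (fun n : ℕ => f (n + 1 + 1)) = fun n : ℕ => f (n + 2) := by
      funext n; norm_num
    rw [hf0, hf1, hswap, hreindex, hprod, tsum_congr hinner]
    ring
  have hzeta : riemannZeta m = ((∑' n : ℕ, f n : ℝ) : ℂ) := by
    rw [zeta_nat_eq_tsum_of_gt_one (by omega : 1 < m), Complex.ofReal_tsum]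
    refine tsum_congr fun n => ?_
    simp only [hf]
    push_cast
    ring
  have hsummand : ∑' r : nonPerfectPowers,
      (Real.cosh (m * Real.log (r : ℕ) / 2) /
        (2 * Real.sinh (m * Real.log (r : ℕ) / 2)) - 1 / 2)
      = ∑' a : nonPerfectPowers, (1 / (((a:ℕ):ℝ) ^ m - 1)) :=
    tsum_congr fun a => key_term m hm (a : ℕ) a.2.1
  rw [hzeta, hreal, hsummand]
  push_cast
  ring
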